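/- Let T : ℕ → ℕ be the shortcut Collatz map. For every M ∈ ℕ, every n < M, and every i ∈ ℕ with i < 2^n, the number of elements x of {1, 2, …, 2^M} with x ≡ i (mod 2^n) and T^{n+1}(x) > T^n(x) equals 2^{M−n−1}; i.e. exactly half of the elements of each residue class modulo 2^n inside {1, …, 2^M} experience an increase at step n+1. -/

import Mathlib

/-- The shortcut Collatz map: `T x = x / 2` if `x` is even, `(3 * x + 1) / 2` if `x` is odd. -/
def T : ℕ → ℕ := fun x => if x % 2 = 0 then x / 2 else (3 * x + 1) / 2

lemma T_add (x a : ℕ) : T (x + 2 * a) = T x + (if x % 2 = 0 then a else 3 * a) := by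
  unfold T
  rcases Nat.even_or_odd x with h | h <;> simp [Nat.even_iff, Nat.odd_iff] at h <;>
    simp [h, Nat.add_mul_mod_self_left] <;> omega

lemma T_iter_add (n : ℕ) : ∀ x a : ℕ, ∃ c : ℕ, c % 2 = 1 ∧
    T^[n] (x + 2 ^ n * a) = T^[n] x + c * a := by
  induction n with
  | zero => intro x a; exact ⟨1, rfl, by simp⟩
  | succ n ih =>
    intro x a
    have h1 : T^[n+1] (x + 2 ^ (n+1) * a) = T^[n] (T (x + 2 * (2 ^ n * a))) := by
      rw [Function.iterate_succ_apply]; ring_nf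
    rw [T_add] at h1
    by_cases hx : x % 2 = 0
    · obtain ⟨c, hc, hcc⟩ := ih (T x) a
      exact ⟨c, hc, by rw [h1, if_pos hx, hcc, Function.iterate_succ_apply]⟩
    · obtain ⟨c, hc, hcc⟩ := ih (T x) (3 * a)
      refine ⟨3 * c, by omega, ?_⟩
      rw [h1, if_neg hx]
      rw [show 2 ^ n * (3 * a) = 3 * (2 ^ n * a) by ring] at hcc
      rw [hcc, Function.iterate_succ_apply]; ring

lemma T_iter_parity (n x y : ℕ) (h : x % 2 ^ (n + 1) = y % 2 ^ (n + 1)) :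
    T^[n] x % 2 = T^[n] y % 2 := by
  wlog hxy : x ≤ y generalizing x y
  · exact (this y x h.symm (by omega)).symm
  obtain ⟨b, hb⟩ := (Nat.modEq_iff_dvd' hxy).mp h
  obtain ⟨a, rfl⟩ : ∃ a, y = x + 2 ^ (n + 1) * a := ⟨b, by omega⟩
  obtain ⟨c, hc, hcc⟩ := T_iter_add n x (2 * a)
  rw [show x + 2 ^ (n+1) * a = x + 2 ^ n * (2 * a) by ring, hcc]
  have : c * (2 * a) = 2 * (c * a) := by ring
  omega

lemma T_iter_flip (n x : ℕ) : T^[n] (x + 2 ^ n) % 2 ≠ T^[n] x % 2 := by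
  obtain ⟨c, hc, hcc⟩ := T_iter_add n x 1
  rw [mul_one] at hcc
  rw [hcc]; omega

lemma T_gt_iff (y : ℕ) : T y > y ↔ y % 2 = 1 := by
  unfold T; rcases Nat.even_or_odd y with h | h <;>
    simp [Nat.even_iff, Nat.odd_iff] at h <;> simp [h] <;> omega

lemma count_residue (q K r : ℕ) (hq : 0 < q) (hr : r < q) :
    ((Finset.Icc 1 (q * K)).filter (fun x => x % q = r)).card = K := by
  have himg : (Finset.Icc 1 (q * K)).filter (fun x => x % q = r) =
      (Finset.range K).image (fun k => q * k + (if r = 0 then q else r)) := by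
    ext x
    simp only [Finset.mem_filter, Finset.mem_Icc, Finset.mem_image, Finset.mem_range]
    constructor
    · rintro ⟨⟨h1, h2⟩, h3⟩
      have hd := Nat.div_add_mod x q
      have hdK : x / q ≤ K := by
        have := Nat.div_le_div_right (c := q) h2
        rwa [Nat.mul_div_cancel_left _ hq] at this
      by_cases h0 : r = 0
      · obtain ⟨d, hdd⟩ : ∃ d, x / q = d + 1 := by
          refine ⟨x / q - 1, ?_⟩
          rcases Nat.eq_zero_or_pos (x / q) with h | h
          · rw [h] at hd; omega
          · omega
        refine ⟨d, by omega, ?_⟩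
        rw [if_pos h0]
        have e1 : q * d + q = q * (d + 1) := by ring
        rw [e1, ← hdd]; omega
      · refine ⟨x / q, ?_, by rw [if_neg h0]; omega⟩
        by_contra hh
        push_neg at hh
        have : q * K ≤ q * (x / q) := Nat.mul_le_mul_left q hh
        omega
    · rintro ⟨k, hk, rfl⟩
      have hk1 : q * (k + 1) ≤ q * K := Nat.mul_le_mul_left q (by omega)
      have e1 : q * k + q = q * (k + 1) := by ring
      by_cases h0 : r = 0
      · rw [if_pos h0]
        refine ⟨⟨by omega, by omega⟩, ?_⟩
        rw [e1, Nat.mul_mod_right, h0]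
      · rw [if_neg h0]
        exact ⟨⟨by omega, by omega⟩, by rw [Nat.mul_add_mod, Nat.mod_eq_of_lt hr]⟩
  rw [himg, Finset.card_image_of_injective _ (fun a b hab => ?_), Finset.card_range]
  have h2 : q * a = q * b := by omega
  exact Nat.eq_of_mul_eq_mul_left hq h2

theorem half_of_each_class_increases (M n i : ℕ) (hn : n < M) (hi : i < 2 ^ n) :
    ((Finset.Icc 1 (2 ^ M)).filter
        (fun x => x % 2 ^ n = i ∧ T^[n + 1] x > T^[n] x)).card = 2 ^ (M - n - 1) := by
  set r : ℕ := if T^[n] i % 2 = 1 then i else i + 2 ^ n with hr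
  have hpow : (2:ℕ) ^ (n + 1) = 2 ^ n + 2 ^ n := by ring
  have hrn : r % 2 ^ n = i := by
    by_cases h : T^[n] i % 2 = 1
    · rw [hr, if_pos h, Nat.mod_eq_of_lt hi]
    · rw [hr, if_neg h, Nat.add_mod_right, Nat.mod_eq_of_lt hi]
  have hrlt : r < 2 ^ (n + 1) := by
    rw [hr]; split <;> omega
  have hrodd : T^[n] r % 2 = 1 := by
    by_cases h : T^[n] i % 2 = 1
    · rw [hr, if_pos h]; exact h
    · rw [hr, if_neg h]; have := T_iter_flip n i; omega
  have key : ∀ x, (x % 2 ^ n = i ∧ T^[n + 1] x > T^[n] x) ↔ x % 2 ^ (n + 1) = r := by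
    intro x
    have hgt : T^[n + 1] x > T^[n] x ↔ T^[n] x % 2 = 1 := by
      rw [Function.iterate_succ_apply', T_gt_iff]
    rw [hgt]
    constructor
    · rintro ⟨h1, h2⟩
      have hx2 : x % 2 ^ (n + 1) = i ∨ x % 2 ^ (n + 1) = i + 2 ^ n := by
        have h3 : x % 2 ^ (n + 1) % 2 ^ n = x % 2 ^ n := by
          rw [Nat.mod_mod_of_dvd]; exact pow_dvd_pow 2 (by omega)
        have h4 : x % 2 ^ (n + 1) < 2 ^ (n + 1) := Nat.mod_lt _ (by positivity)
        have hd := Nat.div_add_mod (x % 2 ^ (n + 1)) (2 ^ n)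
        have h5 : x % 2 ^ (n + 1) / 2 ^ n < 2 := by
          rw [Nat.div_lt_iff_lt_mul (by positivity)]
          have e1 : (2:ℕ) ^ n * 2 = 2 ^ n + 2 ^ n := by ring
          omega
        have h6 : x % 2 ^ (n + 1) / 2 ^ n = 0 ∨ x % 2 ^ (n + 1) / 2 ^ n = 1 := by
          generalize x % 2 ^ (n + 1) / 2 ^ n = d at h5 ⊢
          omega
        rcases h6 with h6 | h6
        · left
          rw [← hd, h6, Nat.mul_zero, Nat.zero_add, h3, h1]
        · right
          rw [← hd, h6, Nat.mul_one, h3, h1, Nat.add_comm]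
      have hpar : T^[n] x % 2 = T^[n] (x % 2 ^ (n + 1)) % 2 :=
        T_iter_parity n x _ (Nat.mod_mod_of_dvd x dvd_rfl).symm
      rcases hx2 with h | h
      · rw [hr, if_pos (by rw [← h2, hpar, h])]; exact h
      · rw [h] at hpar
        have hflip := T_iter_flip n i
        rw [hr, if_neg (by omega)]; exact h
    · intro h
      have hpar : T^[n] x % 2 = T^[n] r % 2 :=
        T_iter_parity n x r (by rw [h, Nat.mod_eq_of_lt hrlt])
      refine ⟨?_, by omega⟩
      have h5 : x % 2 ^ n = x % 2 ^ (n + 1) % 2 ^ n := by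
        rw [Nat.mod_mod_of_dvd _ (pow_dvd_pow 2 (by omega))]
      rw [h5, h, hrn]
  have h2M : (2 : ℕ) ^ M = 2 ^ (n + 1) * 2 ^ (M - n - 1) := by
    rw [← pow_add]; congr 1; omega
  have hfe : (Finset.Icc 1 (2 ^ M)).filter
        (fun x => x % 2 ^ n = i ∧ T^[n + 1] x > T^[n] x) =
      (Finset.Icc 1 (2 ^ (n + 1) * 2 ^ (M - n - 1))).filter
        (fun x => x % 2 ^ (n + 1) = r) := by
    rw [← h2M]
    exact Finset.filter_congr fun x _ => key x
  rw [hfe]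
  exact count_residue _ _ _ (by positivity) hrlt
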